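/- Let (Ω, 𝓕, μ) be a probability space and θ : Ω → Ω an invertible measure-preserving transformation (θ and θ^{−1} measurable, μ ∘ θ^{−1} = μ). Let γ_* ∈ (0, 1] and let γ : Ω → ℝ be measurable with γ_* ≤ γ(ω) ≤ 1 for μ-almost every ω. Let ρ : Ω → M₂(ℂ) be measurable such that for μ-almost every ω, ρ(ω) is a density matrix (positive semidefinite with trace 1) and Φ_{γ(θω)}(ρ(ω)) = ρ(θω). Then ρ(ω) = E₀₀ (the matrix |0⟩⟨0|) for μ-almost every ω. -/

import Mathlib

open Matrix MeasureTheory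
open scoped ComplexOrder

/-- Kraus operator `V₀` of the amplitude-damping channel. -/
noncomputable def adV0 (γ : ℝ) : Matrix (Fin 2) (Fin 2) ℂ :=
  !![1, 0; 0, (Real.sqrt (1 - γ) : ℂ)]

/-- Kraus operator `V₁` of the amplitude-damping channel. -/
noncomputable def adV1 (γ : ℝ) : Matrix (Fin 2) (Fin 2) ℂ :=
  !![0, (Real.sqrt γ : ℂ); 0, 0]

/-- The amplitude-damping channel `Φ_γ(X) = V₀ X V₀ᴴ + V₁ X V₁ᴴ`. -/
noncomputable def adChannel (γ : ℝ) (X : Matrix (Fin 2) (Fin 2) ℂ) :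
    Matrix (Fin 2) (Fin 2) ℂ :=
  adV0 γ * X * (adV0 γ)ᴴ + adV1 γ * X * (adV1 γ)ᴴ

lemma ad_entries (A : Matrix (Fin 2) (Fin 2) ℂ) (hA : A.PosSemidef) :
    0 ≤ (A 0 0).re ∧ 0 ≤ (A 1 1).re ∧
    ((A 1 1).re = 0 → A 1 1 = 0 ∧ A 0 1 = 0 ∧ A 1 0 = 0) := by
  obtain ⟨B, rfl⟩ : ∃ B : Matrix (Fin 2) (Fin 2) ℂ, A = Bᴴ * B := by
    open scoped MatrixOrder in
    exact CStarAlgebra.nonneg_iff_eq_star_mul_self.mp hA.nonneg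
  have hentry : ∀ i j, (Bᴴ * B) i j = ∑ k, (starRingEnd ℂ) (B k i) * B k j := by
    intro i j; simp [Matrix.mul_apply, Matrix.conjTranspose_apply]
  have hdiag : ∀ i, ((Bᴴ * B) i i).re = ∑ k, Complex.normSq (B k i) := by
    intro i
    rw [hentry, Complex.re_sum]
    refine Finset.sum_congr rfl fun k _ => ?_
    rw [mul_comm, Complex.mul_conj]
    simp
  refine ⟨?_, ?_, fun h0 => ?_⟩
  · rw [hdiag]; exact Finset.sum_nonneg fun k _ => Complex.normSq_nonneg _
  · rw [hdiag]; exact Finset.sum_nonneg fun k _ => Complex.normSq_nonneg _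
  · have hz : ∀ k, B k 1 = 0 := by
      rw [hdiag 1] at h0
      intro k
      have := (Finset.sum_eq_zero_iff_of_nonneg
        (fun k _ => Complex.normSq_nonneg (B k 1))).mp h0 k (Finset.mem_univ k)
      exact Complex.normSq_eq_zero.mp this
    refine ⟨?_, ?_, ?_⟩ <;> rw [hentry] <;>
      exact Finset.sum_eq_zero fun k _ => by simp [hz k]

lemma adChannel_one_one (g : ℝ) (hg : g ≤ 1) (X : Matrix (Fin 2) (Fin 2) ℂ) :
    adChannel g X 1 1 = ((1 - g : ℝ) : ℂ) * X 1 1 := by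
  have h : (Real.sqrt (1 - g) : ℂ) * (Real.sqrt (1 - g) : ℂ) = ((1 - g : ℝ) : ℂ) := by
    rw [← Complex.ofReal_mul, Real.mul_self_sqrt (by linarith)]
  simp only [adChannel, adV0, adV1, Matrix.add_apply, Matrix.mul_apply, Fin.sum_univ_two,
    Matrix.conjTranspose_apply, Matrix.cons_val_zero, Matrix.cons_val_one, Matrix.head_cons,
    Matrix.cons_val', Matrix.empty_val', Matrix.cons_val_fin_one, Matrix.head_fin_const,
    Matrix.of_apply, star_zero, star_one, Complex.star_def, Complex.conj_ofReal]
  ring_nf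
  simp [← h]; ring

lemma ad_is_e00 (A : Matrix (Fin 2) (Fin 2) ℂ) (hA : A.PosSemidef)
    (htr : A.trace = 1) (h11 : (A 1 1).re = 0) :
    A = Matrix.single 0 0 1 := by
  obtain ⟨-, -, hz⟩ := ad_entries A hA
  obtain ⟨h1, h2, h3⟩ := hz h11
  have h00 : A 0 0 = 1 := by
    have := htr
    simp [Matrix.trace, Matrix.diag, Fin.sum_univ_two, h1] at this
    exact this
  ext i j
  fin_cases i <;> fin_cases j <;>
    simp [Matrix.single, h00, h1, h2, h3]

/-- **Uniqueness of the dynamically stationary state for disordered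
amplitude damping.**
If `θ` is an invertible measure-preserving transformation, `γ_* ≤ γ ≤ 1` a.e.
with `γ_* > 0`, and `ρ` is a measurable family of density matrices satisfying
the equivariance `Φ_{γ(θω)}(ρ ω) = ρ (θ ω)` a.e., then `ρ ω = |0⟩⟨0|` a.e. -/
theorem stmt15
    {Ω : Type*} [MeasurableSpace Ω] (μ : Measure Ω) [IsProbabilityMeasure μ]
    (θ θinv : Ω → Ω) (hθ : Measurable θ) (hθinv : Measurable θinv)
    (hinv1 : Function.LeftInverse θinv θ) (hinv2 : Function.RightInverse θinv θ)
    (hmp : MeasurePreserving θ μ μ)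
    (γstar : ℝ) (hγstar0 : 0 < γstar) (hγstar1 : γstar ≤ 1)
    (γ : Ω → ℝ) (hγmeas : Measurable γ)
    (hγbdd : ∀ᵐ ω ∂μ, γstar ≤ γ ω ∧ γ ω ≤ 1)
    (ρ : Ω → Matrix (Fin 2) (Fin 2) ℂ)
    (hρmeas : ∀ i j, Measurable fun ω => ρ ω i j)
    (hρ : ∀ᵐ ω ∂μ, (ρ ω).PosSemidef ∧ (ρ ω).trace = 1 ∧
      adChannel (γ (θ ω)) (ρ ω) = ρ (θ ω)) :
    ∀ᵐ ω ∂μ, ρ ω = Matrix.single 0 0 1 := by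
  -- the measurable equivalence given by θ
  let e : Ω ≃ᵐ Ω :=
    { toFun := θ, invFun := θinv, left_inv := hinv1, right_inv := hinv2,
      measurable_toFun := hθ, measurable_invFun := hθinv }
  have hemb : MeasurableEmbedding θ := e.measurableEmbedding
  set f : Ω → ℝ := fun ω => (ρ ω 1 1).re with hf
  have hfmeas : Measurable f := Complex.measurable_re.comp (hρmeas 1 1)
  -- transfer γ bounds along θ
  have hγθ : ∀ᵐ ω ∂μ, γstar ≤ γ (θ ω) ∧ γ (θ ω) ≤ 1 := by
    have : ∀ᵐ ω ∂(Measure.map θ μ), γstar ≤ γ ω ∧ γ ω ≤ 1 := by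
      rw [hmp.map_eq]; exact hγbdd
    exact (ae_map_iff hθ.aemeasurable
      (((measurableSet_le measurable_const hγmeas).inter
        (measurableSet_le hγmeas measurable_const)))).mp this
  -- pointwise a.e. facts
  have hfnn : ∀ᵐ ω ∂μ, 0 ≤ f ω := by
    filter_upwards [hρ] with ω hω
    exact (ad_entries _ hω.1).2.1
  have hfle1 : ∀ᵐ ω ∂μ, f ω ≤ 1 := by
    filter_upwards [hρ] with ω hω
    have h0 : 0 ≤ (ρ ω 0 0).re := (ad_entries _ hω.1).1
    have htr : (ρ ω 0 0).re + (ρ ω 1 1).re = 1 := by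
      have := congrArg Complex.re hω.2.1
      simpa [Matrix.trace, Matrix.diag, Fin.sum_univ_two] using this
    simp only [hf]; linarith
  have hkey : ∀ᵐ ω ∂μ, f (θ ω) ≤ (1 - γstar) * f ω := by
    filter_upwards [hρ, hγθ, hfnn] with ω hω hγω hfω
    have h11 : ρ (θ ω) 1 1 = ((1 - γ (θ ω) : ℝ) : ℂ) * ρ ω 1 1 := by
      rw [← hω.2.2, adChannel_one_one _ hγω.2]
    have : f (θ ω) = (1 - γ (θ ω)) * f ω := by
      simp only [hf, h11, Complex.re_ofReal_mul]
    rw [this]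
    have : (1 - γ (θ ω)) ≤ 1 - γstar := by linarith [hγω.1]
    exact mul_le_mul_of_nonneg_right this hfω
  -- integrability
  have hint : Integrable f μ := by
    refine Integrable.mono' (integrable_const (1 : ℝ)) hfmeas.aestronglyMeasurable ?_
    filter_upwards [hfnn, hfle1] with ω h1 h2
    rw [Real.norm_eq_abs, abs_of_nonneg h1]; exact h2
  have hintθ : Integrable (fun ω => f (θ ω)) μ :=
    (hmp.integrable_comp_emb hemb).mpr hint
  -- integral comparison
  have hIeq : ∫ ω, f (θ ω) ∂μ = ∫ ω, f ω ∂μ := hmp.integral_comp hemb f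
  have hIle : ∫ ω, f (θ ω) ∂μ ≤ ∫ ω, (1 - γstar) * f ω ∂μ :=
    integral_mono_ae hintθ (hint.const_mul _) hkey
  rw [hIeq, integral_const_mul] at hIle
  have hInn : 0 ≤ ∫ ω, f ω ∂μ := integral_nonneg_of_ae hfnn
  have hI0 : ∫ ω, f ω ∂μ = 0 := by nlinarith
  have hf0 : ∀ᵐ ω ∂μ, f ω = 0 :=
    (integral_eq_zero_iff_of_nonneg_ae hfnn hint).mp hI0
  filter_upwards [hρ, hf0] with ω hω h0
  exact ad_is_e00 _ hω.1 hω.2.1 h0
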